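/- Consider updates θ_{t+1} = θₜ − αₜ·dₜ with ‖dₜ‖ ≤ M/ξ, auxiliary extrapolation z_{t+1} = (1 − 1/βₜ)θₜ + (1/βₜ)θ_{t+1}, and define ℱₜ = Σ_{j=1}^{t−1} θⱼ⁽ᵗ⁻¹⁾‖θₜ − z_{j+1}‖ with the convex coefficients θⱼ⁽ᵗ⁾ induced by (βₜ). Then ℱₜ ≤ (1 − β_{t−1})(ℱ_{t−1} + 2‖θₜ − θ_{t−1}‖), and consequently ℱₜ² ≤ (1 − β_{t−1})ℱ_{t−1}² + (4/β_{t−1})‖θₜ − θ_{t−1}‖² ≤ (1 − β_{t−1})ℱ_{t−1}² + (4M²/ξ²)·α_{t−1}²/β_{t−1}. -/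

import Mathlib

/-- The convex-combination coefficients `θⱼ⁽ᵗ⁾ = βⱼ ∏_{i=j+1}^t (1 - βᵢ)`. -/
def smoothingCoef (β : ℕ → ℝ) (j t : ℕ) : ℝ :=
  β j * ∏ i ∈ Finset.Icc (j + 1) t, (1 - β i)

/-- `ℱₜ = Σ_{j=1}^{t−1} θⱼ⁽ᵗ⁻¹⁾ ‖θₜ − z_{j+1}‖`. -/
noncomputable def Fseq {p : ℕ} (β : ℕ → ℝ) (θ z : ℕ → EuclideanSpace ℝ (Fin p)) (t : ℕ) : ℝ :=
  ∑ j ∈ Finset.Icc 1 (t - 1), smoothingCoef β j (t - 1) * ‖θ t - z (j + 1)‖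

lemma coef_nonneg (β : ℕ → ℝ) (hβ : ∀ t, β t ∈ Set.Ioc (0 : ℝ) 1) (j t : ℕ) :
    0 ≤ smoothingCoef β j t := by
  apply mul_nonneg (hβ j).1.le
  apply Finset.prod_nonneg
  intro i _
  linarith [(hβ i).2]

lemma coef_sum (β : ℕ → ℝ) (n : ℕ) :
    ∑ j ∈ Finset.Icc 1 n, smoothingCoef β j n
      = 1 - ∏ i ∈ Finset.Icc 1 n, (1 - β i) := by
  induction n with
  | zero => simp
  | succ n ih =>
    rw [Finset.sum_Icc_succ_top (by omega : 1 ≤ n + 1),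
        Finset.prod_Icc_succ_top (by omega : 1 ≤ n + 1)]
    have h1 : ∀ j ∈ Finset.Icc 1 n, smoothingCoef β j (n + 1)
        = smoothingCoef β j n * (1 - β (n + 1)) := by
      intro j hj
      simp only [Finset.mem_Icc] at hj
      rw [smoothingCoef, smoothingCoef,
        Finset.prod_Icc_succ_top (by omega : j + 1 ≤ n + 1)]
      ring
    rw [Finset.sum_congr rfl h1, ← Finset.sum_mul, ih]
    have : smoothingCoef β (n+1) (n+1) = β (n+1) := by
      simp [smoothingCoef]
    rw [this]; ring

lemma coef_sum_le_one (β : ℕ → ℝ) (hβ : ∀ t, β t ∈ Set.Ioc (0 : ℝ) 1) (n : ℕ) :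
    ∑ j ∈ Finset.Icc 1 n, smoothingCoef β j n ≤ 1 := by
  rw [coef_sum]
  have : 0 ≤ ∏ i ∈ Finset.Icc 1 n, (1 - β i) :=
    Finset.prod_nonneg (fun i _ => by linarith [(hβ i).2])
  linarith

lemma Fseq_nonneg {p : ℕ} (β : ℕ → ℝ) (hβ : ∀ t, β t ∈ Set.Ioc (0 : ℝ) 1)
    (θ z : ℕ → EuclideanSpace ℝ (Fin p)) (t : ℕ) : 0 ≤ Fseq β θ z t := by
  apply Finset.sum_nonneg
  intro j _
  exact mul_nonneg (coef_nonneg β hβ j _) (norm_nonneg _)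

set_option maxHeartbeats 1000000 in
/-- for ADAM-style updates `θ_{t+1} = θₜ − αₜdₜ` with `‖dₜ‖ ≤ M/ξ` and
extrapolation `z_{t+1} = (1 − 1/βₜ)θₜ + (1/βₜ)θ_{t+1}`, the quantity `ℱₜ` satisfies
`ℱₜ ≤ (1 − β_{t−1})(ℱ_{t−1} + 2‖θₜ − θ_{t−1}‖)` and consequently
`ℱₜ² ≤ (1 − β_{t−1})ℱ_{t−1}² + (4/β_{t−1})‖θₜ − θ_{t−1}‖²
     ≤ (1 − β_{t−1})ℱ_{t−1}² + (4M²/ξ²)α_{t−1}²/β_{t−1}`. -/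
theorem extrapolation_F_recursion {p : ℕ}
    (β α : ℕ → ℝ) (hβ : ∀ t, β t ∈ Set.Ioc (0 : ℝ) 1)
    (θ z : ℕ → EuclideanSpace ℝ (Fin p)) (d : ℕ → EuclideanSpace ℝ (Fin p))
    (M ξ : ℝ) (hξ : 0 < ξ) (hM : 0 ≤ M)
    (hd : ∀ t, ‖d t‖ ≤ M / ξ)
    (hθ : ∀ t, θ (t + 1) = θ t - α t • d t)
    (hz : ∀ t, z (t + 1) = (1 - 1 / β t) • θ t + (1 / β t) • θ (t + 1)) :
    ∀ t : ℕ, 2 ≤ t →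
      Fseq β θ z t ≤ (1 - β (t - 1)) * (Fseq β θ z (t - 1) + 2 * ‖θ t - θ (t - 1)‖)
      ∧ (Fseq β θ z t) ^ 2
          ≤ (1 - β (t - 1)) * (Fseq β θ z (t - 1)) ^ 2
            + 4 / β (t - 1) * ‖θ t - θ (t - 1)‖ ^ 2
      ∧ (Fseq β θ z t) ^ 2
          ≤ (1 - β (t - 1)) * (Fseq β θ z (t - 1)) ^ 2
            + (4 * M ^ 2 / ξ ^ 2) * ((α (t - 1)) ^ 2 / β (t - 1)) := by
  intro t ht
  obtain ⟨n, rfl⟩ : ∃ n, t = n + 2 := ⟨t - 2, by omega⟩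
  have ht1 : n + 2 - 1 = n + 1 := by omega
  rw [ht1]
  set b := β (n + 1) with hb
  have hb0 : 0 < b := (hβ (n+1)).1
  have hb1 : b ≤ 1 := (hβ (n+1)).2
  set D := ‖θ (n + 2) - θ (n + 1)‖ with hD
  have hD0 : 0 ≤ D := norm_nonneg _
  set F := Fseq β θ z (n + 1) with hF
  have hF0 : 0 ≤ F := Fseq_nonneg β hβ θ z (n+1)
  have hFt0 : 0 ≤ Fseq β θ z (n + 2) := Fseq_nonneg β hβ θ z (n+2)
  -- Part 1
  have part1 : Fseq β θ z (n + 2) ≤ (1 - b) * (F + 2 * D) := by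
    have hzt : θ (n + 2) - z (n + 2) = (1 - 1 / b) • (θ (n + 2) - θ (n + 1)) := by
      rw [hz (n + 1)]
      module
    have h1b' : 1 ≤ 1 / b := by rw [le_div_iff₀ hb0]; linarith
    have hznorm : ‖θ (n + 2) - z (n + 2)‖ = (1 / b - 1) * D := by
      rw [hzt, norm_smul, Real.norm_eq_abs, abs_of_nonpos (by linarith), ← hD]
      ring
    have hFt : Fseq β θ z (n + 2)
        = ∑ j ∈ Finset.Icc 1 n, smoothingCoef β j (n + 1) * ‖θ (n + 2) - z (j + 1)‖
          + b * ((1 / b - 1) * D) := by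
      rw [Fseq]
      have : n + 2 - 1 = n + 1 := by omega
      rw [this, Finset.sum_Icc_succ_top (by omega : 1 ≤ n + 1)]
      congr 1
      rw [hznorm.symm]
      congr 1
      simp [smoothingCoef, hb]
    rw [hFt]
    have hb' : b * ((1 / b - 1) * D) = (1 - b) * D := by
      field_simp
    rw [hb']
    have hsum : ∑ j ∈ Finset.Icc 1 n, smoothingCoef β j (n + 1) * ‖θ (n + 2) - z (j + 1)‖
        ≤ (1 - b) * (F + D) := by
      have step : ∀ j ∈ Finset.Icc 1 n,
          smoothingCoef β j (n + 1) * ‖θ (n + 2) - z (j + 1)‖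
            ≤ (1 - b) * (smoothingCoef β j n * ‖θ (n + 1) - z (j + 1)‖
               + smoothingCoef β j n * D) := by
        intro j hj
        simp only [Finset.mem_Icc] at hj
        have hc : smoothingCoef β j (n + 1) = smoothingCoef β j n * (1 - b) := by
          rw [smoothingCoef, smoothingCoef,
            Finset.prod_Icc_succ_top (by omega : j + 1 ≤ n + 1)]
          ring
        have htri : ‖θ (n + 2) - z (j + 1)‖ ≤ ‖θ (n + 1) - z (j + 1)‖ + D :=
          norm_sub_le_norm_sub_add_norm_sub _ _ _ |>.trans (by rw [hD]; ring_nf; rfl)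
        rw [hc]
        have hcn := coef_nonneg β hβ j n
        have h1b : 0 ≤ 1 - b := by linarith
        nlinarith [mul_le_mul_of_nonneg_left htri hcn]
      calc ∑ j ∈ Finset.Icc 1 n, smoothingCoef β j (n + 1) * ‖θ (n + 2) - z (j + 1)‖
          ≤ ∑ j ∈ Finset.Icc 1 n, (1 - b) * (smoothingCoef β j n * ‖θ (n + 1) - z (j + 1)‖
               + smoothingCoef β j n * D) := Finset.sum_le_sum step
        _ = (1 - b) * (F + (∑ j ∈ Finset.Icc 1 n, smoothingCoef β j n) * D) := by
            rw [hF, Fseq]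
            have : n + 1 - 1 = n := by omega
            rw [this, Finset.sum_mul, ← Finset.mul_sum, Finset.sum_add_distrib]
        _ ≤ (1 - b) * (F + D) := by
            have hs := coef_sum_le_one β hβ n
            have h1b : 0 ≤ 1 - b := by linarith
            exact mul_le_mul_of_nonneg_left
              (by nlinarith [mul_le_mul_of_nonneg_right hs hD0]) h1b
    linarith
  have h1b : (0:ℝ) ≤ 1 - b := by linarith
  have part2 : (Fseq β θ z (n + 2)) ^ 2 ≤ (1 - b) * F ^ 2 + 4 / b * D ^ 2 := by
    have hsq : (Fseq β θ z (n + 2)) ^ 2 ≤ ((1 - b) * (F + 2 * D)) ^ 2 := by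
      apply sq_le_sq' <;> nlinarith
    have key : ((1 - b) * (F + 2 * D)) ^ 2 ≤ (1 - b) * F ^ 2 + 4 / b * D ^ 2 := by
      rw [div_mul_eq_mul_div, ← sub_le_iff_le_add', le_div_iff₀ hb0]
      have e1 : b * (F + 2 * D) ^ 2 ≤ b * (1 + b) * F ^ 2 + (1 + b) * 4 * D ^ 2 := by
        nlinarith [sq_nonneg (b * F - 2 * D)]
      have e2 : (1 - b) ^ 2 * (1 + b) ≤ 1 - b := by
        nlinarith [mul_nonneg h1b (sq_nonneg b)]
      have e3 : (1 - b) ^ 2 * (1 + b) ≤ 1 := by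
        nlinarith [mul_nonneg h1b (sq_nonneg b)]
      linarith [mul_le_mul_of_nonneg_left e1 (sq_nonneg (1 - b)),
        mul_le_mul_of_nonneg_right e2 (mul_nonneg hb0.le (sq_nonneg F)),
        mul_le_mul_of_nonneg_right e3 (by positivity : (0:ℝ) ≤ 4 * D ^ 2)]
    linarith
  refine ⟨part1, part2, ?_⟩
  have hDle : D ≤ |α (n + 1)| * (M / ξ) := by
    rw [hD, hθ (n + 1)]
    have heq : θ (n + 1) - α (n + 1) • d (n + 1) - θ (n + 1)
        = -(α (n + 1) • d (n + 1)) := by abel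
    rw [heq, norm_neg, norm_smul, Real.norm_eq_abs]
    exact mul_le_mul_of_nonneg_left (hd (n + 1)) (abs_nonneg _)
  have hD2 : D ^ 2 ≤ (α (n + 1)) ^ 2 * (M / ξ) ^ 2 := by
    have := pow_le_pow_left₀ hD0 hDle 2
    calc D ^ 2 ≤ (|α (n + 1)| * (M / ξ)) ^ 2 := this
      _ = (α (n + 1)) ^ 2 * (M / ξ) ^ 2 := by rw [mul_pow, sq_abs]
  have heq2 : 4 / b * ((α (n + 1)) ^ 2 * (M / ξ) ^ 2)
      = (4 * M ^ 2 / ξ ^ 2) * ((α (n + 1)) ^ 2 / b) := by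
    field_simp
  have hstep : 4 / b * D ^ 2 ≤ (4 * M ^ 2 / ξ ^ 2) * ((α (n + 1)) ^ 2 / b) := by
    rw [← heq2]
    exact mul_le_mul_of_nonneg_left hD2 (by positivity)
  linarith
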